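/- Let μ be a q-tame Borel measure on ℝ² with continuous persistence landscape λ_μ. Then for every t ∈ ℝ and every h ≥ 0, the measure of the open quadrant can be reconstructed from the landscape: μ(Q_{t,h}) = inf{a > 0 : λ_μ(a,t) ≤ h} (where μ(Q_{t,h}) is regarded as a real number, and the infimum is over a nonempty set of positive reals bounded below by 0). -/

import Mathlib

open MeasureTheory Set Filter Topology

/-- The open quadrant `Q_{t,h} = (-∞, t-h) × (t+h, ∞)`. -/
def quadrant (t h : ℝ) : Set (ℝ × ℝ) := Set.Iio (t - h) ×ˢ Set.Ioi (t + h)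

/-- A Borel measure on `ℝ²` is q-tame if every open quadrant has finite measure. -/
def QTame (μ : Measure (ℝ × ℝ)) : Prop := ∀ t h : ℝ, 0 ≤ h → μ (quadrant t h) < ⊤

/-- The continuous persistence landscape `λ_μ(a,t) = sup {h > 0 : μ(Q_{t,h}) ≥ a}`,
with the convention `sup ∅ = 0` (which is the convention of `Real.sSup`). -/
noncomputable def landscape (μ : Measure (ℝ × ℝ)) (a t : ℝ) : ℝ :=
  sSup {h : ℝ | 0 < h ∧ a ≤ (μ (quadrant t h)).toReal}

lemma quadrant_anti (t : ℝ) {h₁ h₂ : ℝ} (hle : h₁ ≤ h₂) :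
    quadrant t h₂ ⊆ quadrant t h₁ := by
  rintro ⟨x, y⟩ ⟨hx, hy⟩
  simp only [Set.mem_Iio] at hx
  simp only [Set.mem_Ioi] at hy
  exact ⟨show x < t - h₁ by linarith, show t + h₁ < y by linarith⟩

lemma quadrant_meas (t h : ℝ) : MeasurableSet (quadrant t h) :=
  measurableSet_Iio.prod measurableSet_Ioi

/-- The set defining the landscape is bounded above, for `a > 0`. -/
lemma landscape_set_bddAbove (μ : Measure (ℝ × ℝ)) (hμ : QTame μ) (t a : ℝ) (ha : 0 < a) :
    BddAbove {h : ℝ | 0 < h ∧ a ≤ (μ (quadrant t h)).toReal} := by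
  -- μ (quadrant t n) → 0 as n → ∞
  have hinter : (⋂ n : ℕ, quadrant t n) = ∅ := by
    ext ⟨x, y⟩
    simp only [Set.mem_iInter, Set.mem_empty_iff_false, iff_false, not_forall]
    obtain ⟨n, hn⟩ := exists_nat_gt (t - x)
    refine ⟨n, fun hmem => ?_⟩
    have := hmem.1
    simp only [quadrant, Set.mem_prod, Set.mem_Iio] at this
    linarith
  have htend : Tendsto (fun n : ℕ => μ (quadrant t n)) atTop (𝓝 0) := by
    have := MeasureTheory.tendsto_measure_iInter_atTop
      (μ := μ) (s := fun n : ℕ => quadrant t n)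
      (fun n => (quadrant_meas t n).nullMeasurableSet)
      (fun m n hmn => quadrant_anti t (by exact_mod_cast hmn))
      ⟨0, by simpa using (hμ t 0 le_rfl).ne⟩
    rwa [hinter, measure_empty] at this
  have : ∀ᶠ n : ℕ in atTop, μ (quadrant t n) < ENNReal.ofReal a :=
    htend.eventually_lt_const (ENNReal.ofReal_pos.mpr ha)
  obtain ⟨N, hN⟩ := this.exists
  refine ⟨N, fun x hx => ?_⟩
  by_contra hxN
  push_neg at hxN
  have hsub : μ (quadrant t x) ≤ μ (quadrant t N) :=
    measure_mono (quadrant_anti t hxN.le)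
  have hlt : μ (quadrant t x) < ENNReal.ofReal a := lt_of_le_of_lt hsub hN
  have : (μ (quadrant t x)).toReal < a := by
    rcases eq_top_or_lt_top (μ (quadrant t x)) with htop | hfin
    · rw [htop] at hlt; exact absurd hlt (by simp)
    · have := ENNReal.toReal_lt_toReal hfin.ne (by simp : ENNReal.ofReal a ≠ ⊤) |>.mpr hlt
      rwa [ENNReal.toReal_ofReal ha.le] at this
  linarith [hx.2]

/-- Right continuity: if `a < μ(Q_{t,h}).toReal` then some strictly larger `h'` still works. -/
lemma exists_gt_of_lt_measure (μ : Measure (ℝ × ℝ)) (hμ : QTame μ) (t h a : ℝ)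
    (hh : 0 ≤ h) (ha : a < (μ (quadrant t h)).toReal) :
    ∃ h' : ℝ, h < h' ∧ a ≤ (μ (quadrant t h')).toReal := by
  rcases le_or_gt a 0 with h0 | h0
  · exact ⟨h + 1, by linarith, le_trans h0 ENNReal.toReal_nonneg⟩
  have hfin : μ (quadrant t h) ≠ ⊤ := (hμ t h hh).ne
  have hunion : quadrant t h = ⋃ n : ℕ, quadrant t (h + 1 / (n + 1)) := by
    ext ⟨x, y⟩
    simp only [Set.mem_iUnion, quadrant, Set.mem_prod, Set.mem_Iio, Set.mem_Ioi]
    constructor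
    · rintro ⟨hx, hy⟩
      obtain ⟨n, hn⟩ := exists_nat_one_div_lt (show (0:ℝ) < min (t - h - x) (y - (t + h)) by
        exact lt_min (by linarith) (by linarith))
      refine ⟨n, ?_, ?_⟩
      · have := lt_of_lt_of_le hn (min_le_left _ _); linarith
      · have := lt_of_lt_of_le hn (min_le_right _ _); linarith
    · rintro ⟨n, hx, hy⟩
      have hpos : (0:ℝ) < 1 / (n + 1) := by positivity
      exact ⟨by linarith, by linarith⟩
  have hmono : Monotone fun n : ℕ => quadrant t (h + 1 / (n + 1)) := by
    intro m n hmn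
    apply quadrant_anti
    have : (1 : ℝ) / (n + 1) ≤ 1 / (m + 1) := by
      apply one_div_le_one_div_of_le (by positivity)
      exact_mod_cast Nat.succ_le_succ hmn
    linarith
  have hsup : μ (quadrant t h) = ⨆ n : ℕ, μ (quadrant t (h + 1 / (n + 1))) := by
    rw [hunion]
    exact hmono.directed_le.measure_iUnion
  have hlt : ENNReal.ofReal a < μ (quadrant t h) :=
    (ENNReal.ofReal_lt_iff_lt_toReal h0.le hfin).mpr ha
  rw [hsup] at hlt
  obtain ⟨n, hn⟩ := lt_iSup_iff.mp hlt
  have hpos : (0:ℝ) < 1 / ((n:ℝ) + 1) := by positivity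
  refine ⟨h + 1 / (n + 1), by linarith, ?_⟩
  have hfin' : μ (quadrant t (h + 1 / (n + 1))) ≠ ⊤ := (hμ t _ (by linarith)).ne
  exact ((ENNReal.ofReal_lt_iff_lt_toReal h0.le hfin').mp hn).le

/-- Reconstruction of quadrant measures from the continuous persistence landscape:
`μ(Q_{t,h}) = inf {a > 0 : λ_μ(a,t) ≤ h}`. -/
theorem quadrant_measure_eq_inf_landscape
    (μ : Measure (ℝ × ℝ)) (hμ : QTame μ) (t h : ℝ) (hh : 0 ≤ h) :
    (μ (quadrant t h)).toReal = sInf {a : ℝ | 0 < a ∧ landscape μ a t ≤ h} := by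
  set F : ℝ → ℝ := fun h' => (μ (quadrant t h')).toReal with hF
  -- membership lemma: for ε > 0, F h + ε belongs to the set
  have hmem : ∀ ε : ℝ, 0 < ε → (F h + ε) ∈ {a : ℝ | 0 < a ∧ landscape μ a t ≤ h} := by
    intro ε hε
    have hFnn : 0 ≤ F h := ENNReal.toReal_nonneg
    refine ⟨by linarith, ?_⟩
    apply Real.sSup_le _ hh
    rintro x ⟨hx0, hxF⟩
    by_contra hxh
    push_neg at hxh
    have : μ (quadrant t x) ≤ μ (quadrant t h) := measure_mono (quadrant_anti t hxh.le)
    have hle : F x ≤ F h :=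
      (ENNReal.toReal_le_toReal (hμ t x hx0.le).ne (hμ t h hh).ne).mpr this
    linarith
  have hne : {a : ℝ | 0 < a ∧ landscape μ a t ≤ h}.Nonempty := ⟨F h + 1, hmem 1 one_pos⟩
  apply le_antisymm
  · -- F h is a lower bound
    apply le_csInf hne
    rintro a ⟨ha0, hal⟩
    by_contra hlt
    push_neg at hlt
    obtain ⟨h', hh', ha'⟩ := exists_gt_of_lt_measure μ hμ t h a hh hlt
    have hmem' : h' ∈ {h : ℝ | 0 < h ∧ a ≤ (μ (quadrant t h)).toReal} :=
      ⟨lt_of_le_of_lt hh hh', ha'⟩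
    have := le_csSup (landscape_set_bddAbove μ hμ t a ha0) hmem'
    have : h' ≤ h := le_trans this hal
    linarith
  · -- sInf ≤ F h
    apply le_of_forall_pos_le_add
    intro ε hε
    exact csInf_le ⟨0, fun x hx => hx.1.le⟩ (hmem ε hε)
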